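/- Let E, ω, α, λ be real numbers with λ ≠ 0 and α ≠ 0, and let Φ be a real-analytic function on a neighborhood of 0 with Φ'(0) ≠ 0 which satisfies the ε = 0 Yukawa-type equation Φ''(x) + [2E − ω²x² − (2√2·α/x)·exp(−√2·x/λ)]·Φ(x) = 0 for all x in some interval (0, δ) with δ > 0. Then, writing C_1 = Φ'(0) and C_3 = Φ'''(0)/6 for the Taylor coefficients of Φ at 0, the energy satisfies E = 2α² − 2α/λ − 3·C_3/C_1. -/

import Mathlib

open Real Filter Metric Set

theorem yukawa_energy_formula
    (E ω α lam : ℝ) (hlam : lam ≠ 0) (hα : α ≠ 0)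
    (Φ : ℝ → ℝ) (hA : AnalyticAt ℝ Φ 0) (h1 : deriv Φ 0 ≠ 0)
    (δ : ℝ) (hδ : 0 < δ)
    (hODE : ∀ x ∈ Set.Ioo (0 : ℝ) δ,
      deriv (deriv Φ) x
        + (2 * E - ω ^ 2 * x ^ 2
            - (2 * Real.sqrt 2 * α / x) * Real.exp (-Real.sqrt 2 * x / lam)) * Φ x = 0) :
    E = 2 * α ^ 2 - 2 * α / lam - 3 * (iteratedDeriv 3 Φ 0 / 6) / deriv Φ 0 := by
  obtain ⟨r, hr, hB⟩ := hA.exists_ball_analyticOnNhd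
  set Φ' := deriv Φ with hΦ'
  set g := deriv Φ' with hg
  set g' := deriv g with hg'
  have hB1 : AnalyticOnNhd ℝ Φ' (ball 0 r) := hB.deriv
  have hB2 : AnalyticOnNhd ℝ g (ball 0 r) := hB1.deriv
  have hB3 : AnalyticOnNhd ℝ g' (ball 0 r) := hB2.deriv
  have h0mem : (0:ℝ) ∈ ball (0:ℝ) r := by simpa using hr
  set Ex : ℝ → ℝ := fun x => Real.exp (-Real.sqrt 2 * x / lam) with hEx
  have hExD : ∀ x : ℝ, HasDerivAt Ex (-Real.sqrt 2 / lam * Ex x) x := by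
    intro x
    have hin : HasDerivAt (fun x : ℝ => -Real.sqrt 2 * x / lam) (-Real.sqrt 2 / lam) x := by
      simpa using ((hasDerivAt_id x).const_mul (-Real.sqrt 2)).div_const lam
    have h2 := hin.exp
    convert h2 using 1
    simp only [hEx]; ring
  set P : ℝ → ℝ := fun x => 2*E*x - ω^2*x^3 - 2*Real.sqrt 2*α * Ex x with hP
  set P1 : ℝ → ℝ := fun x =>
    2*E - 3*ω^2*x^2 - 2*Real.sqrt 2*α * (-Real.sqrt 2 / lam * Ex x) with hP1
  set P2 : ℝ → ℝ := fun x =>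
    -6*ω^2*x - 2*Real.sqrt 2*α * ((-Real.sqrt 2 / lam)^2 * Ex x) with hP2
  have hPD : ∀ x : ℝ, HasDerivAt P (P1 x) x := by
    intro x
    have h := (((hasDerivAt_id x).const_mul (2*E)).sub
      ((hasDerivAt_pow 3 x).const_mul (ω^2))).sub ((hExD x).const_mul (2*Real.sqrt 2*α))
    refine h.congr_deriv ?_
    simp only [hP1]; push_cast; ring
  have hP1D : ∀ x : ℝ, HasDerivAt P1 (P2 x) x := by
    intro x
    have h := ((hasDerivAt_const x (2*E)).sub
      ((hasDerivAt_pow 2 x).const_mul (3*ω^2))).sub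
      (((hExD x).const_mul (-Real.sqrt 2 / lam)).const_mul (2*Real.sqrt 2*α))
    refine h.congr_deriv ?_
    simp only [hP2]; push_cast; ring
  set F : ℝ → ℝ := fun x => x * g x + P x * Φ x with hF
  set F1 : ℝ → ℝ := fun x => g x + x * g' x + (P1 x * Φ x + P x * Φ' x) with hF1
  have hFzero : ∀ x ∈ Set.Ioo (0:ℝ) δ, F x = 0 := by
    intro x hx
    have hx0 : x ≠ 0 := ne_of_gt hx.1
    have h := hODE x hx
    have hfe : F x = x * (g x
        + (2 * E - ω ^ 2 * x ^ 2
            - (2 * Real.sqrt 2 * α / x) * Real.exp (-Real.sqrt 2 * x / lam)) * Φ x) := by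
      simp only [hF, hP, hEx]
      field_simp
    rw [hfe, h, mul_zero]
  have hFan : AnalyticAt ℝ F 0 := by
    have hgan : AnalyticAt ℝ g 0 := hB2 0 h0mem
    have hExan : AnalyticAt ℝ Ex 0 :=
      (((analyticAt_const.mul analyticAt_id).div analyticAt_const hlam)).rexp
    have hPan : AnalyticAt ℝ P 0 :=
      ((analyticAt_const.mul analyticAt_id).sub
        (analyticAt_const.mul (analyticAt_id.pow 3))).sub (analyticAt_const.mul hExan)
    exact (analyticAt_id.mul hgan).add (hPan.mul hA)
  have hFeq : F =ᶠ[nhds 0] 0 := by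
    rcases hFan.eventually_eq_zero_or_eventually_ne_zero with h | h
    · exact h
    · exfalso
      have hle : nhdsWithin (0:ℝ) (Ioi 0) ≤ nhdsWithin (0:ℝ) {(0:ℝ)}ᶜ :=
        nhdsWithin_mono 0 (fun x hx => ne_of_gt hx)
      have h2 : ∀ᶠ x in nhdsWithin (0:ℝ) (Ioi 0), F x = 0 :=
        eventually_of_mem (Ioo_mem_nhdsGT_of_mem (by simp [le_refl, hδ])) hFzero
      have h3 := h.filter_mono hle
      obtain ⟨x, hx1, hx2⟩ := (h2.and h3).exists
      exact hx2 hx1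
  have hF0 : F 0 = 0 := by simpa using hFeq.eq_of_nhds
  have hderivF : deriv F =ᶠ[nhds 0] F1 := by
    filter_upwards [isOpen_ball.eventually_mem h0mem] with x hx
    have hΦd : HasDerivAt Φ (Φ' x) x := (hB x hx).differentiableAt.hasDerivAt
    have hgd : HasDerivAt g (g' x) x := (hB2 x hx).differentiableAt.hasDerivAt
    have hFD : HasDerivAt F (1 * g x + x * g' x + (P1 x * Φ x + P x * Φ' x)) x :=
      ((hasDerivAt_id x).mul hgd).add ((hPD x).mul hΦd)
    rw [hFD.deriv]
    simp only [hF1, one_mul]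
  have hF1eq : F1 =ᶠ[nhds 0] 0 := by
    have hz : deriv F =ᶠ[nhds 0] 0 :=
      hFeq.deriv.trans (Filter.Eventually.of_forall fun x => by
        exact deriv_const x (0:ℝ))
    exact hderivF.symm.trans hz
  have hF10 : F1 0 = 0 := by simpa using hF1eq.eq_of_nhds
  have hdF1 : deriv F1 0 = 0 := by
    have h := hF1eq.deriv.eq_of_nhds
    have hz : deriv (0 : ℝ → ℝ) 0 = 0 := deriv_const (0:ℝ) (0:ℝ)
    rw [hz] at h
    exact h
  have hΦd0 : HasDerivAt Φ (Φ' 0) 0 := (hB 0 h0mem).differentiableAt.hasDerivAt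
  have hΦ'd0 : HasDerivAt Φ' (g 0) 0 := (hB1 0 h0mem).differentiableAt.hasDerivAt
  have hgd0 : HasDerivAt g (g' 0) 0 := (hB2 0 h0mem).differentiableAt.hasDerivAt
  have hg'd0 : HasDerivAt g' (deriv g' 0) 0 := (hB3 0 h0mem).differentiableAt.hasDerivAt
  have hF1D : HasDerivAt F1 (g' 0 + (1 * g' 0 + 0 * deriv g' 0)
      + ((P2 0 * Φ 0 + P1 0 * Φ' 0) + (P1 0 * Φ' 0 + P 0 * g 0))) 0 :=
    (hgd0.add ((hasDerivAt_id 0).mul hg'd0)).add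
      (((hP1D 0).mul hΦd0).add ((hPD 0).mul hΦ'd0))
  have e2 : g' 0 + (1 * g' 0 + 0 * deriv g' 0)
      + ((P2 0 * Φ 0 + P1 0 * Φ' 0) + (P1 0 * Φ' 0 + P 0 * g 0)) = 0 := by
    rw [← hF1D.deriv]; exact hdF1
  have hEx0 : Ex 0 = 1 := by simp [hEx]
  have s2 : Real.sqrt 2 * Real.sqrt 2 = 2 := Real.mul_self_sqrt (by norm_num)
  have hsne : Real.sqrt 2 ≠ 0 := by positivity
  -- Φ 0 = 0
  have e0 : (0:ℝ) * g 0 + (2*E*0 - ω^2*0^3 - 2*Real.sqrt 2*α * Ex 0) * Φ 0 = 0 := by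
    have := hF0; simpa only [hF] using this
  have hΦ0 : Φ 0 = 0 := by
    rw [hEx0] at e0
    have key : 2*Real.sqrt 2*α * Φ 0 = 0 := by linear_combination -e0
    have hne : 2*Real.sqrt 2*α ≠ 0 := mul_ne_zero (mul_ne_zero two_ne_zero hsne) hα
    exact (mul_eq_zero.mp key).resolve_left hne
  -- g 0
  have e1 : g 0 + 0 * g' 0 + (P1 0 * Φ 0 + P 0 * Φ' 0) = 0 := by
    have := hF10; simpa only [hF1] using this
  have hg0 : g 0 = 2*Real.sqrt 2*α * Φ' 0 := by
    simp only [hP, hP1] at e1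
    rw [hEx0, hΦ0] at e1
    linear_combination e1
  -- g' 0
  have hg'0 : g' 0 = (4*α^2 - 2*E - 4*α/lam) * Φ' 0 := by
    simp only [hP, hP1, hP2] at e2
    rw [hEx0, hΦ0, hg0] at e2
    have key : lam * g' 0 = (4*α^2*lam - 2*E*lam - 4*α) * Φ' 0 := by
      have hl : lam * lam⁻¹ = 1 := mul_inv_cancel₀ hlam
      simp only [div_eq_mul_inv] at e2
      linear_combination (lam/2) * e2 + (2*α^2*lam*Φ' 0 - 2*α*Φ' 0) * s2 + (-2*Real.sqrt 2^2*α*Φ' 0) * hl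
    field_simp
    try linear_combination key
    try linarith [key]
  have hiter : iteratedDeriv 3 Φ 0 = g' 0 := by
    simp only [iteratedDeriv_succ, iteratedDeriv_zero]
    try rfl
  rw [hiter, hg'0]
  field_simp
  try ring
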